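/- Let (P, X) be a half-decorated non-crossing partition of [m'] ∪ [m]. Then ⋂_{n∈ℤ} Σⁿ U_{(P,X)} = D (that is, an arc a satisfies Σⁿ a ∈ U_{(P,X)} for all n ∈ ℤ exactly when both endpoints of a lie in one primed copy) if and only if x_p ≠ p⁺ for every p ∈ [m] and no block of P contains two distinct labels of [m']. -/

import Mathlib

namespace PY

/-! ### The ∞-gon `Z_{2m}`

Labels are elements of `Fin (2 * m)`, ordered `1' < 1 < 2' < 2 < ⋯ < m' < m`:
the label `2 * i` is the primed (accumulation-point) label `(i+1)'` and the label
`2 * i + 1` is the unprimed label `i + 1`.  A point of `Z_{2m}` is a pair of a label and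
an integer. -/

/-- Points of the ∞-gon `Z_{2m}`: a label and an integer. -/
abbrev Pt (m : ℕ) := Fin (2 * m) × ℤ

/-- Cyclic successor of a label. -/
def cycSucc {n : ℕ} (r : Fin n) : Fin n := ⟨(r.1 + 1) % n, Nat.mod_lt _ r.pos⟩

/-- Cyclic predecessor of a label. -/
def cycPred {n : ℕ} (r : Fin n) : Fin n := ⟨(r.1 + (n - 1)) % n, Nat.mod_lt _ r.pos⟩

/-- Strict lexicographic order on the points of `Z_{2m}`. -/
def ptLt {m : ℕ} (a b : Pt m) : Prop := a.1 < b.1 ∨ (a.1 = b.1 ∧ a.2 < b.2)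

/-- `sort2 a b` is the pair `(a, b)` arranged in (weakly) increasing lexicographic
order; it realizes the notation `|a, b|` for the arc connecting two points. -/
def sort2 {m : ℕ} (a b : Pt m) : Pt m × Pt m :=
  if a.1 < b.1 ∨ (a.1 = b.1 ∧ a.2 ≤ b.2) then (a, b) else (b, a)

/-- An ordered pair of points of `Z_{2m}` is an arc when its endpoints are in increasing
lexicographic order and, if they lie in the same copy of `ℤ`, differ by at least `2`. -/
def IsArc {m : ℕ} (x : Pt m × Pt m) : Prop :=
  ptLt x.1 x.2 ∧ (x.1.1 = x.2.1 → x.1.2 + 2 ≤ x.2.2)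

/-- The precovering conditions (PC conditions) for a set of arcs of `Z_{2m}`. -/
structure PCcond {m : ℕ} (U : Set (Pt m × Pt m)) : Prop where
  pc1 : ∀ p q : Fin (2 * m), p ≠ q → ∀ x1 x2 : ℕ → ℤ, StrictMono x1 → StrictMono x2 →
    (∀ n, ((p, x1 n), (q, x2 n)) ∈ U) →
    ∃ y1 y2 : ℕ → ℤ, StrictAnti y1 ∧ StrictAnti y2 ∧
      ∀ n, sort2 (cycSucc p, y1 n) (cycSucc q, y2 n) ∈ U
  pc2 : ∀ p q : Fin (2 * m), p ≠ cycSucc q → ∀ x1 x2 : ℕ → ℤ,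
    StrictAnti x1 → StrictMono x2 →
    (∀ n, ((p, x1 n), (q, x2 n)) ∈ U) →
    ∃ y1 y2 : ℕ → ℤ, StrictAnti y1 ∧ StrictAnti y2 ∧
      ∀ n, sort2 (p, y1 n) (cycSucc q, y2 n) ∈ U
  pc2' : ∀ p q : Fin (2 * m), q ≠ cycSucc p → p ≠ q → ∀ x1 x2 : ℕ → ℤ,
    StrictMono x1 → StrictAnti x2 →
    (∀ n, ((p, x1 n), (q, x2 n)) ∈ U) →
    ∃ y1 y2 : ℕ → ℤ, StrictAnti y1 ∧ StrictAnti y2 ∧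
      ∀ n, sort2 (cycSucc p, y1 n) (q, y2 n) ∈ U
  pc3 : ∀ p q : Fin (2 * m), ∀ (x1 : ℤ) (x2 : ℕ → ℤ), StrictMono x2 →
    (∀ n, ((p, x1), (q, x2 n)) ∈ U) →
    ∃ y2 : ℕ → ℤ, StrictAnti y2 ∧ ∀ n, sort2 (p, x1) (cycSucc q, y2 n) ∈ U
  pc3' : ∀ p q : Fin (2 * m), p ≠ q → ∀ (x1 : ℕ → ℤ) (x2 : ℤ), StrictMono x1 →
    (∀ n, ((p, x1 n), (q, x2)) ∈ U) →
    ∃ y1 : ℕ → ℤ, StrictAnti y1 ∧ ∀ n, sort2 (cycSucc p, y1 n) (q, x2) ∈ U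

/-- A point is admissible for the subcategory `A`: its label is unprimed, or it is a
point `(q, n)` of a primed copy with `n ≤ z0`. -/
def memA {m : ℕ} (z0 : ℤ) (a : Pt m) : Prop :=
  a.1.1 % 2 = 1 ∨ (a.1.1 % 2 = 0 ∧ a.2 ≤ z0)

/-- The set of arcs `A` determined by the choice of `z0`. -/
def setA (m : ℕ) (z0 : ℤ) : Set (Pt m × Pt m) :=
  {x | memA z0 x.1 ∧ memA z0 x.2}

/-! ### Decorations

The linearly ordered set `{p} ∪ Z^(p) ∪ {p⁺}` is modelled as `WithBot (WithTop ℤ)`: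
`⊥` is the accumulation point `p`, an integer `n` is the point `n` of `Z^(p)`, and the
top element is the accumulation point `p⁺`. -/

/-- The linearly ordered set `{p} ∪ Z^(p) ∪ {p⁺}`. -/
abbrev Dm := WithBot (WithTop ℤ)

/-- An integer, viewed in `{p} ∪ Z^(p) ∪ {p⁺}`. -/
def toDm (n : ℤ) : Dm := ((n : WithTop ℤ) : Dm)

/-- The element `p⁺` of `{p} ∪ Z^(p) ∪ {p⁺}`. -/
def topDm : Dm := ((⊤ : WithTop ℤ) : Dm)

/-- The unprimed label `p ∈ [m]` with index `i`. -/
def unpr {m : ℕ} (i : Fin m) : Fin (2 * m) := ⟨2 * i.1 + 1, by have := i.2; omega⟩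

/-- The primed label `p' ∈ [m']` with index `i`. -/
def prim {m : ℕ} (i : Fin m) : Fin (2 * m) := ⟨2 * i.1, by have := i.2; omega⟩

/-- Four points of `Fin n` (viewed on a circle with its natural cyclic order) are in
(strict, anticlockwise) cyclic order. -/
def Cyc4 {n : ℕ} (a b c d : Fin n) : Prop :=
  (a < b ∧ b < c ∧ c < d) ∨ (b < c ∧ c < d ∧ d < a) ∨
  (c < d ∧ d < a ∧ a < b) ∨ (d < a ∧ a < b ∧ b < c)

/-- A partition (setoid) of `Fin n` is non-crossing if there are no elements
`i1, j1, i2, j2` in cyclic order with `i1, i2` in one block and `j1, j2` in a different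
block. -/
def IsNoncrossing {n : ℕ} (P : Setoid (Fin n)) : Prop :=
  ∀ i1 j1 i2 j2 : Fin n, Cyc4 i1 j1 i2 j2 → P.r i1 i2 → P.r j1 j2 → P.r i1 j1

/-! ### Alternating non-crossing partitions and the arc sets `U_{(P,X)}` -/

/-- A point of `Z_{2m}` belongs to the interval `[x_{p⁻}, p⁺)` attached to the primed
label `p' ∈ [m']` of index `j`: it lies in the primed copy `Z^(p)`, or in the unprimed
copy `Z^(p⁻)` above the decoration `x_{p⁻}`. -/
def altRegion {m : ℕ} (x : Fin m → Dm) (j : Fin m) (a : Pt m) : Prop :=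
  a.1 = prim j ∨ (a.1 = unpr (cycPred j) ∧ x (cycPred j) ≤ toDm a.2)

/-- The set of arcs `U_{(P,X)}` associated with an alternating non-crossing partition
`(P, X)`: arcs both of whose endpoints lie in `⋃_{p ∈ B} [x_{p⁻}, p⁺)` for a single
block `B` of `P`. -/
def altU {m : ℕ} (P : Setoid (Fin m)) (x : Fin m → Dm) : Set (Pt m × Pt m) :=
  {a | IsArc a ∧ ∃ b : Fin m,
    (∃ j, P.r b j ∧ altRegion x j a.1) ∧ (∃ j, P.r b j ∧ altRegion x j a.2)}

end PY

namespace PY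

/-- The condition on the decorations of a half-decorated non-crossing partition of
`[m'] ∪ [m]`: for an unprimed label `p` (of index `i`, with cyclic successor the primed
label `p⁺` of index `i + 1`), if `{p}` is a block of `P` then `x_p ≠ p⁺`; if `p` and `p⁺`
lie in a common block of `P` then `x_p ≠ p`; otherwise `x_p ∈ Z^(p)`. -/
def HalfDecCond {m : ℕ} (P : Setoid (Fin (2 * m))) (x : Fin m → Dm) : Prop :=
  ∀ i : Fin m,
    ((∀ r, P.r (unpr i) r → r = unpr i) → x i ≠ topDm) ∧
    (P.r (unpr i) (prim (cycSucc i)) → x i ≠ (⊥ : Dm)) ∧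
    (¬ (∀ r, P.r (unpr i) r → r = unpr i) → ¬ P.r (unpr i) (prim (cycSucc i)) →
      ∃ n : ℤ, x i = toDm n)

/-- A point of `Z_{2m}` lies in the region attached to the block of the label `b`: its
label lies in the block of `b` and, if its label is an unprimed label `p`, then it lies
in the interval `(p, x_p]`. -/
def hdRegion {m : ℕ} (P : Setoid (Fin (2 * m))) (x : Fin m → Dm) (b : Fin (2 * m))
    (a : Pt m) : Prop :=
  P.r b a.1 ∧ ∀ i : Fin m, a.1 = unpr i → toDm a.2 ≤ x i

/-- The set of arcs `U_{(P,X)}` associated with a half-decorated non-crossing partition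
`(P, X)`: arcs both of whose endpoints lie in
`(⋃_{p ∈ B ∩ [m]} (p, x_p]) ∪ (⋃_{p ∈ B ∩ [m']} Z^(p))` for a single block `B` of `P`. -/
def hdU {m : ℕ} (P : Setoid (Fin (2 * m))) (x : Fin m → Dm) : Set (Pt m × Pt m) :=
  {a | IsArc a ∧ ∃ b : Fin (2 * m), hdRegion P x b a.1 ∧ hdRegion P x b a.2}

end PY

namespace PY

/-- The shift `Σⁿ` on arcs: it subtracts `n` from both integer coordinates and keeps the
labels. -/
def shiftArc {m : ℕ} (n : ℤ) (a : Pt m × Pt m) : Pt m × Pt m :=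
  ((a.1.1, a.1.2 - n), (a.2.1, a.2.2 - n))

/-- An arc of `Z_{2m}` belongs to `D`: both endpoints lie in one primed copy. -/
def memD {m : ℕ} (a : Pt m × Pt m) : Prop :=
  a.1.1 = a.2.1 ∧ a.1.1.1 % 2 = 0

end PY

/-!
STATEMENT 18: Let (P, X) be a half-decorated non-crossing partition of [m'] ∪ [m]. Then
⋂_{n ∈ ℤ} Σⁿ U_{(P,X)} = D (that is, an arc a satisfies Σⁿ a ∈ U_{(P,X)} for all n ∈ ℤ
exactly when both endpoints of a lie in one primed copy) if and only if x_p ≠ p⁺ for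
every p ∈ [m] and no block of P contains two distinct labels of [m'].
-/


namespace PY

lemma shift_isArc' {m : ℕ} (n : ℤ) {a : Pt m × Pt m} (h : IsArc a) :
    IsArc (shiftArc n a) := by
  obtain ⟨h1, h2⟩ := h
  refine ⟨?_, ?_⟩
  · rcases h1 with h | ⟨he, hl⟩
    · exact Or.inl h
    · refine Or.inr ⟨he, ?_⟩
      show a.1.2 - n < a.2.2 - n
      omega
  · intro he
    have h3 := h2 he
    show a.1.2 - n + 2 ≤ a.2.2 - n
    omega

lemma unpr_odd {m : ℕ} (i : Fin m) : (unpr i).1 % 2 = 1 := by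
  simp [unpr]

lemma exists_unpr {m : ℕ} (r : Fin (2 * m)) (hr : r.1 % 2 = 1) :
    ∃ i : Fin m, r = unpr i := by
  refine ⟨⟨r.1 / 2, by omega⟩, ?_⟩
  apply Fin.ext
  simp [unpr]; omega

lemma toDm_le_false {d : Dm} (hd : d ≠ topDm) (z : ℤ)
    (h : ∀ n : ℤ, toDm (z - n) ≤ d) : False := by
  cases hd' : d with
  | none =>
    have h0 := h 0
    rw [hd'] at h0
    exact absurd h0 (by simp [toDm]; exact WithBot.not_coe_le_bot _)
  | some t =>
    cases t with
    | top => exact hd (by rw [hd']; rfl)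
    | coe k =>
      have h0 := h (z - k - 1)
      rw [hd'] at h0
      have h1 : toDm (z - (z - k - 1)) ≤ toDm k := h0
      have h2 : (z - (z - k - 1) : ℤ) ≤ k := by
        rw [toDm, toDm, WithBot.coe_le_coe, WithTop.coe_le_coe] at h1
        exact h1
      omega

lemma prim_block_false {m : ℕ} (P : Setoid (Fin (2 * m))) (x : Fin m → Dm)
    (h : ∀ a : Pt m × Pt m, IsArc a →
        ((∀ n : ℤ, shiftArc n a ∈ hdU P x) ↔ memD a))
    (r s : Fin (2 * m)) (hr : r.1 % 2 = 0) (hs : s.1 % 2 = 0)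
    (hrs : P.r r s) (hlt : r < s) : False := by
  set a : Pt m × Pt m := ((r, 0), (s, 0)) with ha_def
  have ha : IsArc a := ⟨Or.inl hlt, fun he => absurd he (ne_of_lt hlt)⟩
  have hmem : ∀ n : ℤ, shiftArc n a ∈ hdU P x := by
    intro n
    refine ⟨shift_isArc' n ha, r, ⟨P.refl r, ?_⟩, ⟨hrs, ?_⟩⟩
    · intro i hi
      have hi' : r = unpr i := hi
      rw [hi'] at hr
      have := unpr_odd (m := m) i
      omega
    · intro i hi
      have hi' : s = unpr i := hi
      rw [hi'] at hs
      have := unpr_odd (m := m) i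
      omega
  have := (h a ha).mp hmem
  exact absurd this.1 (ne_of_lt hlt)

end PY

open PY in
theorem inter_shifts_hdU_eq_D_iff
    (m : ℕ) (hm : 0 < m)
    (P : Setoid (Fin (2 * m))) (x : Fin m → Dm)
    (hP : IsNoncrossing P) (hx : HalfDecCond P x) :
    (∀ a : Pt m × Pt m, IsArc a →
        ((∀ n : ℤ, shiftArc n a ∈ hdU P x) ↔ memD a)) ↔
      ((∀ i : Fin m, x i ≠ topDm) ∧
        ∀ r s : Fin (2 * m), r.1 % 2 = 0 → s.1 % 2 = 0 → P.r r s → r = s) := by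
  constructor
  · intro h
    constructor
    · intro i hxi
      set a : Pt m × Pt m := ((unpr i, 0), (unpr i, 2)) with ha_def
      have ha : IsArc a := ⟨Or.inr ⟨rfl, by norm_num⟩, fun _ => by norm_num⟩
      have hmem : ∀ n : ℤ, shiftArc n a ∈ hdU P x := by
        intro n
        have hreg : ∀ z : ℤ, hdRegion P x (unpr i) (unpr i, z) := by
          intro z
          refine ⟨P.refl _, fun j hj => ?_⟩
          have hij : i = j := by
            have h' : unpr (m := m) i = unpr j := hj
            have hv := congrArg Fin.val h'
            simp only [unpr] at hv
            exact Fin.ext (by omega)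
          rw [← hij, hxi]
          exact WithBot.coe_le_coe.mpr le_top
        exact ⟨shift_isArc' n ha, unpr i, hreg _, hreg _⟩
      have hd := (h a ha).mp hmem
      have h0 : (unpr (m := m) i).1 % 2 = 0 := hd.2
      have := unpr_odd (m := m) i
      omega
    · intro r s hr hs hrs
      by_contra hne
      rcases lt_or_gt_of_ne hne with hlt | hlt
      · exact prim_block_false P x h r s hr hs hrs hlt
      · exact prim_block_false P x h s r hs hr (P.symm hrs) hlt
  · rintro ⟨hxt, hprim⟩ a ha
    constructor
    · intro hall
      have hno : ∀ (lbl : Fin (2 * m)) (z : ℤ),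
          (∀ n : ℤ, ∃ i : Fin m, lbl = unpr i → toDm (z - n) ≤ x i) →
          True := fun _ _ _ => trivial
      have hpar : ∀ k : Fin 2, True := fun _ => trivial
      -- first endpoint label is primed
      have h1 : a.1.1.1 % 2 = 0 := by
        by_contra hodd
        obtain ⟨i, hi⟩ := exists_unpr a.1.1 (by omega)
        refine toDm_le_false (hxt i) a.1.2 (fun n => ?_)
        obtain ⟨_, b, ⟨_, h1'⟩, _⟩ := hall n
        exact h1' i hi
      have h2 : a.2.1.1 % 2 = 0 := by
        by_contra hodd
        obtain ⟨i, hi⟩ := exists_unpr a.2.1 (by omega)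
        refine toDm_le_false (hxt i) a.2.2 (fun n => ?_)
        obtain ⟨_, b, _, ⟨_, h2'⟩⟩ := hall n
        exact h2' i hi
      obtain ⟨_, b, ⟨hb1, _⟩, ⟨hb2, _⟩⟩ := hall 0
      exact ⟨hprim _ _ h1 h2 (P.trans (P.symm hb1) hb2), h1⟩
    · intro hd n
      have hreg : ∀ (lbl : Fin (2 * m)) (z : ℤ), lbl.1 % 2 = 0 →
          hdRegion P x a.1.1 (lbl, z) ∨ True := fun _ _ _ => Or.inr trivial
      refine ⟨shift_isArc' n ha, a.1.1,
        ⟨P.refl _, fun i hi => ?_⟩, ⟨hd.1 ▸ P.refl _, fun i hi => ?_⟩⟩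
      · have hi' : a.1.1 = unpr i := hi
        have h0 : (unpr (m := m) i).1 % 2 = 0 := hi' ▸ hd.2
        have := unpr_odd (m := m) i
        omega
      · have hi' : a.2.1 = unpr i := hi
        have h1 : a.2.1.1 % 2 = 0 := hd.1 ▸ hd.2
        have h0 : (unpr (m := m) i).1 % 2 = 0 := hi' ▸ h1
        have := unpr_odd (m := m) i
        omega
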